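/- Let ν be a probability measure on [0,1]^n. The Border inequality ∑_{i∈N} ∫_{C_i} x_i dν_i(x_i) ≤ ν(⋃_i (C_i × [0,1]^{n-1})) for all measurable C_i ⊆ [0,1] (together with ∑_i ∫ x_i dν_i = 1) is equivalent to the floor-constraint inequality ∑_{i∈N} ∫_{C_i} x_i dν_i(x_i) ≥ ν(C_1 × ⋯ × C_n) for all measurable C_i ⊆ [0,1] (together with ∑_i ∫ x_i dν_i = 1). -/

import Mathlib

open MeasureTheory

/-- Equivalence of the ceiling (Border*) and floor forms of the Border inequalities
for a probability measure on `[0,1]^n`. -/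
theorem stmt_2 {n : ℕ} (hn : 2 ≤ n)
    (ν : Measure (Fin n → ℝ)) [IsProbabilityMeasure ν]
    (hsupp : ν {x | ∀ i, x i ∈ Set.Icc (0 : ℝ) 1} = 1) :
    ((∀ C : Fin n → Set ℝ, (∀ i, MeasurableSet (C i)) →
        ∑ i, ∫ x in C i, x ∂(ν.map (fun y => y i)) ≤
          (ν {x | ∃ i, x i ∈ C i}).toReal) ∧
      ∑ i, ∫ x, x ∂(ν.map (fun y => y i)) = 1)
    ↔
    ((∀ C : Fin n → Set ℝ, (∀ i, MeasurableSet (C i)) →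
        (ν {x | ∀ i, x i ∈ C i}).toReal ≤
          ∑ i, ∫ x in C i, x ∂(ν.map (fun y => y i))) ∧
      ∑ i, ∫ x, x ∂(ν.map (fun y => y i)) = 1) := by
  have hmeas : ∀ i : Fin n, Measurable (fun y : Fin n → ℝ => y i) :=
    fun i => measurable_pi_apply i
  -- a.e. support
  have hS : MeasurableSet {x : Fin n → ℝ | ∀ i, x i ∈ Set.Icc (0 : ℝ) 1} := by
    have : {x : Fin n → ℝ | ∀ i, x i ∈ Set.Icc (0 : ℝ) 1}
        = ⋂ i, (fun x : Fin n → ℝ => x i) ⁻¹' Set.Icc (0 : ℝ) 1 := by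
      ext x; simp
    rw [this]
    exact MeasurableSet.iInter fun i => measurableSet_Icc.preimage (hmeas i)
  have haeν : ∀ᵐ y ∂ν, ∀ i, y i ∈ Set.Icc (0 : ℝ) 1 := by
    have hc : ν {x : Fin n → ℝ | ∀ i, x i ∈ Set.Icc (0 : ℝ) 1}ᶜ = 0 := by
      rw [measure_compl hS (measure_ne_top ν _), hsupp, measure_univ, tsub_self]
    rw [ae_iff]
    convert hc using 2
    rfl
  have hint : ∀ i : Fin n, Integrable (fun x : ℝ => x) (ν.map (fun y => y i)) := by
    intro i
    have hae : ∀ᵐ x ∂(ν.map (fun y => y i)), x ∈ Set.Icc (0 : ℝ) 1 := by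
      exact (ae_map_iff (hmeas i).aemeasurable measurableSet_Icc).mpr
        (haeν.mono fun y hy => hy i)
    have : IsProbabilityMeasure (ν.map (fun y => y i)) :=
      Measure.isProbabilityMeasure_map (hmeas i).aemeasurable
    refine (integrable_const (1 : ℝ)).mono' measurable_id.aestronglyMeasurable ?_
    filter_upwards [hae] with x hx
    rw [Real.norm_eq_abs, abs_le]
    exact ⟨le_trans (by norm_num) hx.1, hx.2⟩
  -- splitting sums
  have hsplit : ∀ (C : Fin n → Set ℝ), (∀ i, MeasurableSet (C i)) →
      ∑ i, ∫ x, x ∂(ν.map (fun y => y i)) =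
        (∑ i, ∫ x in C i, x ∂(ν.map (fun y => y i))) +
        (∑ i, ∫ x in (C i)ᶜ, x ∂(ν.map (fun y => y i))) := by
    intro C hC
    rw [← Finset.sum_add_distrib]
    exact Finset.sum_congr rfl fun i _ => (integral_add_compl (hC i) (hint i)).symm
  -- complement measure
  have hcompl : ∀ (t : Set (Fin n → ℝ)), MeasurableSet t →
      (ν tᶜ).toReal = 1 - (ν t).toReal := by
    intro t ht
    rw [prob_compl_eq_one_sub ht, ENNReal.toReal_sub_of_le prob_le_one ENNReal.one_ne_top,
      ENNReal.toReal_one]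
  have hAll : ∀ (C : Fin n → Set ℝ), (∀ i, MeasurableSet (C i)) →
      MeasurableSet {x : Fin n → ℝ | ∀ i, x i ∈ C i} := by
    intro C hC
    have : {x : Fin n → ℝ | ∀ i, x i ∈ C i}
        = ⋂ i, (fun x : Fin n → ℝ => x i) ⁻¹' C i := by ext x; simp
    rw [this]
    exact MeasurableSet.iInter fun i => (hC i).preimage (hmeas i)
  have hEx : ∀ (C : Fin n → Set ℝ), (∀ i, MeasurableSet (C i)) →
      MeasurableSet {x : Fin n → ℝ | ∃ i, x i ∈ C i} := by
    intro C hC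
    have : {x : Fin n → ℝ | ∃ i, x i ∈ C i}
        = ⋃ i, (fun x : Fin n → ℝ => x i) ⁻¹' C i := by ext x; simp
    rw [this]
    exact MeasurableSet.iUnion fun i => (hC i).preimage (hmeas i)
  constructor
  · rintro ⟨hB, hsum⟩
    refine ⟨?_, hsum⟩
    intro C hC
    have h1 := hB (fun i => (C i)ᶜ) (fun i => (hC i).compl)
    have hset : {x : Fin n → ℝ | ∃ i, x i ∈ (C i)ᶜ}
        = {x : Fin n → ℝ | ∀ i, x i ∈ C i}ᶜ := by
      ext x; simp [not_forall]
    rw [hset, hcompl _ (hAll C hC)] at h1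
    have h2 := hsplit C hC
    rw [hsum] at h2
    linarith
  · rintro ⟨hF, hsum⟩
    refine ⟨?_, hsum⟩
    intro C hC
    have h1 := hF (fun i => (C i)ᶜ) (fun i => (hC i).compl)
    have hset : {x : Fin n → ℝ | ∀ i, x i ∈ (C i)ᶜ}
        = {x : Fin n → ℝ | ∃ i, x i ∈ C i}ᶜ := by
      ext x; simp [not_exists]
    rw [hset, hcompl _ (hEx C hC)] at h1
    have h2 := hsplit C hC
    rw [hsum] at h2
    linarith
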